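/- Let n ≥ 3 be odd and let F̄_0 = conv{0, e_1, …, e_{(n−1)/2}, −e_{(n+1)/2}, …, −e_{n−1}, −(e_1 + ⋯ + e_{n−1})} ⊂ ℝ^{n−1}. Then NVol_{n−1}(F̄_0) = (n+1)/2. -/

import Mathlib

open MeasureTheory Finset Pointwise

/-- The vertex set of
`F̄_0 = conv{0, e_1, …, e_{(n-1)/2}, -e_{(n+1)/2}, …, -e_{n-1}, -(e_1 + ⋯ + e_{n-1})} ⊂ ℝ^{n-1}`:
in 0-indexed coordinates of `ℝ^{n-1}`, the origin, `e_i` for `i < (n-1)/2`, `-e_i` for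
`(n-1)/2 ≤ i < n-1`, and the all-`(-1)`s vector `-(e_1 + ⋯ + e_{n-1})`. -/
def F0barVertices (n : ℕ) : Set (Fin (n - 1) → ℝ) :=
  {0} ∪
    {v | ∃ i : Fin (n - 1),
        ((i : ℕ) < (n - 1) / 2 ∧ v = Pi.single i 1) ∨
        ((n - 1) / 2 ≤ (i : ℕ) ∧ v = -Pi.single i 1)} ∪
    {(fun _ => -1 : Fin (n - 1) → ℝ)}

/-- The corner simplex. -/
def corner (m : ℕ) : Set (Fin m → ℝ) :=
  {y | (∀ i, 0 ≤ y i) ∧ ∑ i, y i ≤ 1}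

lemma isClosed_corner (m : ℕ) : IsClosed (corner m) := by
  have h1 : IsClosed {y : Fin m → ℝ | ∀ i, 0 ≤ y i} := by
    have : {y : Fin m → ℝ | ∀ i, 0 ≤ y i} = ⋂ i, {y | 0 ≤ y i} := by
      ext y; simp
    rw [this]
    exact isClosed_iInter fun i => isClosed_le continuous_const (continuous_apply i)
  have h2 : IsClosed {y : Fin m → ℝ | ∑ i, y i ≤ 1} :=
    isClosed_le (by continuity) continuous_const
  exact h1.inter h2

lemma measurableSet_corner (m : ℕ) : MeasurableSet (corner m) :=
  (isClosed_corner m).measurableSet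

lemma corner_subset_Icc (m : ℕ) : corner m ⊆ Set.Icc (0 : Fin m → ℝ) 1 := by
  rintro y ⟨hy, hs⟩
  constructor
  · intro i; exact hy i
  · intro i
    have : y i ≤ ∑ j, y j := Finset.single_le_sum (fun j _ => hy j) (mem_univ i)
    exact this.trans hs

lemma isCompact_corner (m : ℕ) : IsCompact (corner m) :=
  (isCompact_Icc).of_isClosed_subset (isClosed_corner m) (corner_subset_Icc m)

lemma volume_corner : ∀ m : ℕ, volume (corner m) = ((m.factorial : ℕ) : ENNReal)⁻¹ := by
  intro m
  induction m with
  | zero =>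
      have : corner 0 = Set.univ := by
        ext y; simp [corner]
      rw [this]
      rw [MeasureTheory.volume_pi, Measure.pi_univ]
      simp
  | succ m ih =>
      set c := volume (corner m) with hc
      set e := MeasurableEquiv.piFinSuccAbove (fun _ : Fin (m + 1) => ℝ) 0 with he
      have hmp : MeasurePreserving e :=
        volume_preserving_piFinSuccAbove (fun _ : Fin (m + 1) => ℝ) 0
      set E : Set (ℝ × (Fin m → ℝ)) :=
        {p | 0 ≤ p.1 ∧ (∀ i, 0 ≤ p.2 i) ∧ p.1 + ∑ i, p.2 i ≤ 1} with hEdef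
      have hEclosed : IsClosed E := by
        have h1 : IsClosed {p : ℝ × (Fin m → ℝ) | 0 ≤ p.1} :=
          isClosed_le continuous_const continuous_fst
      
        have h2 : IsClosed {p : ℝ × (Fin m → ℝ) | ∀ i, 0 ≤ p.2 i} := by
          have : {p : ℝ × (Fin m → ℝ) | ∀ i, 0 ≤ p.2 i} = ⋂ i, {p | 0 ≤ p.2 i} := by
            ext p; simp
          rw [this]
          exact isClosed_iInter fun i =>
            isClosed_le continuous_const ((continuous_apply i).comp continuous_snd)
        have h3 : IsClosed {p : ℝ × (Fin m → ℝ) | p.1 + ∑ i, p.2 i ≤ 1} := by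
          apply isClosed_le _ continuous_const
          apply continuous_fst.add
          exact continuous_finset_sum _ fun i _ => (continuous_apply i).comp continuous_snd
        have hEeq : E = ({p : ℝ × (Fin m → ℝ) | 0 ≤ p.1} ∩ {p | ∀ i, 0 ≤ p.2 i}) ∩
            {p | p.1 + ∑ i, p.2 i ≤ 1} := by
          ext p; simp [hEdef, and_assoc]
        rw [hEeq]
        exact (h1.inter h2).inter h3
      have hE : MeasurableSet E := hEclosed.measurableSet
      have hpre : corner (m + 1) = e ⁻¹' E := by
        ext x
        have hex : e x = (x 0, fun j : Fin m => x (Fin.succAbove 0 j)) := rfl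
        simp only [corner, Set.mem_setOf_eq, Set.mem_preimage, hex, hEdef]
        rw [Fin.sum_univ_succ, Fin.forall_fin_succ]
        simp [Fin.succAbove, Fin.succ]
        constructor
        · rintro ⟨⟨h0, hs⟩, hsum⟩
          exact ⟨h0, fun i => hs i, hsum⟩
        · rintro ⟨h0, hs, hsum⟩
          exact ⟨⟨h0, fun i => hs i⟩, hsum⟩
      have hvol : volume (corner (m + 1)) = (volume : Measure (ℝ × (Fin m → ℝ))) E := by
        rw [hpre]
        exact hmp.measure_preimage hE.nullMeasurableSet
      have hprod : (volume : Measure (ℝ × (Fin m → ℝ))) E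
          = ∫⁻ t : ℝ, volume {y : Fin m → ℝ | (t, y) ∈ E} := by
        rw [MeasureTheory.Measure.volume_eq_prod, MeasureTheory.Measure.prod_apply hE]
        rfl
      have hslice : ∀ t : ℝ, volume {y : Fin m → ℝ | (t, y) ∈ E}
          = Set.indicator (Set.Icc (0:ℝ) 1)
              (fun t => ENNReal.ofReal ((1 - t) ^ m) * c) t := by
        intro t
        by_cases ht : t ∈ Set.Icc (0:ℝ) 1
        · obtain ⟨ht0, ht1⟩ := ht
          have hset : {y : Fin m → ℝ | (t, y) ∈ E} = (1 - t) • corner m := by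
            ext y
            simp only [hEdef, Set.mem_setOf_eq, Set.mem_smul_set]
            constructor
            · rintro ⟨-, hy, hsum⟩
              rcases lt_or_eq_of_le ht1 with h1 | h1
              · refine ⟨(1 - t)⁻¹ • y, ⟨?_, ?_⟩, ?_⟩
                · intro i
                  exact mul_nonneg (inv_nonneg.2 (by linarith)) (hy i)
                · simp only [Pi.smul_apply, smul_eq_mul]
                  rw [← Finset.mul_sum, inv_mul_le_iff₀ (by linarith), mul_one]
                  linarith
                · rw [smul_smul, mul_inv_cancel₀ (by linarith), one_smul]
              · have hy0 : y = 0 := by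
                  funext i
                  have h1' : ∑ i, y i ≤ 0 := by rw [← h1] at hsum; linarith
                  have h2' : y i ≤ ∑ j, y j :=
                    Finset.single_le_sum (fun j _ => hy j) (Finset.mem_univ i)
                  have := hy i
                  simp only [Pi.zero_apply]
                  linarith
              
                exact ⟨0, show (0 : Fin m → ℝ) ∈ corner m from ⟨fun i => le_refl 0, by simp⟩,
                  by simp [hy0]⟩
            · rintro ⟨z, ⟨hz, hzs⟩, rfl⟩
              refine ⟨ht0, fun i => mul_nonneg (by linarith) (hz i), ?_⟩
              have : ∑ i, (1 - t) * z i = (1 - t) * ∑ i, z i := by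
                rw [Finset.mul_sum]
              simp only [Pi.smul_apply, smul_eq_mul]
              rw [this]
              nlinarith [Finset.sum_nonneg (fun i (_ : i ∈ Finset.univ) => hz i)]
          rw [hset, Set.indicator_of_mem (Set.mem_Icc.mpr ⟨ht0, ht1⟩),
            Measure.addHaar_smul_of_nonneg volume (by linarith : (0:ℝ) ≤ 1 - t)]
          congr 2
          simp [Module.finrank_fintype_fun_eq_card]
        · rw [Set.indicator_of_notMem ht]
          have : {y : Fin m → ℝ | (t, y) ∈ E} = ∅ := by
            ext y
            simp only [hEdef, Set.mem_setOf_eq, Set.mem_empty_iff_false, iff_false]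
            rintro ⟨h0, hy, hsum⟩
            apply ht
            refine ⟨h0, ?_⟩
            have : (0:ℝ) ≤ ∑ i, y i := Finset.sum_nonneg fun i _ => hy i
            linarith
          simp [this]
      have hint : ∫⁻ t : ℝ, volume {y : Fin m → ℝ | (t, y) ∈ E}
          = ∫⁻ t in Set.Icc (0:ℝ) 1, ENNReal.ofReal ((1 - t) ^ m) * c := by
        simp_rw [hslice]
        rw [lintegral_indicator measurableSet_Icc]
      have hJ : ∫⁻ t in Set.Icc (0:ℝ) 1, ENNReal.ofReal ((1 - t) ^ m)
          = ENNReal.ofReal (1 / (m + 1)) := by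
        have hcont : Continuous fun t : ℝ => (1 - t) ^ m := by continuity
        have hInt : IntegrableOn (fun t : ℝ => (1 - t) ^ m) (Set.Icc (0:ℝ) 1) :=
          hcont.integrableOn_Icc
        rw [← MeasureTheory.ofReal_integral_eq_lintegral_ofReal hInt ?_]
        · congr 1
          rw [MeasureTheory.integral_Icc_eq_integral_Ioc,
            ← intervalIntegral.integral_of_le (zero_le_one)]
          rw [intervalIntegral.integral_comp_sub_left (fun x => x ^ m) 1]
          simp [integral_pow]
        · refine Filter.eventually_of_mem (self_mem_ae_restrict measurableSet_Icc) ?_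
          intro t ht
          exact pow_nonneg (by linarith [ht.2]) m
      calc volume (corner (m + 1))
          = ∫⁻ t in Set.Icc (0:ℝ) 1, ENNReal.ofReal ((1 - t) ^ m) * c := by
            rw [hvol, hprod, hint]
        _ = (∫⁻ t in Set.Icc (0:ℝ) 1, ENNReal.ofReal ((1 - t) ^ m)) * c := by
            rw [lintegral_mul_const]
            exact (ENNReal.measurable_ofReal.comp (by fun_prop))
        _ = ENNReal.ofReal (1 / (m + 1)) * c := by rw [hJ]
        _ = ((((m+1).factorial : ℕ)) : ENNReal)⁻¹ := by
            rw [ih]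
            have h1 : ENNReal.ofReal (1 / (m + 1 : ℝ)) = (((m+1 : ℕ)) : ENNReal)⁻¹ := by
              rw [one_div, ENNReal.ofReal_inv_of_pos (by positivity)]
              congr 1
              rw [show ((m:ℝ)+1) = ((m+1:ℕ):ℝ) by push_cast; ring, ENNReal.ofReal_natCast]
            rw [h1, Nat.factorial_succ]
            rw [← ENNReal.mul_inv (by simp) (by simp)]
            congr 1
            push_cast
            ring

section Main

variable (m k : ℕ)

/-- sign vector -/
def dvec : Fin m → ℝ := fun i => if (i : ℕ) < k then 1 else -1

lemma dvec_sq (i : Fin m) : dvec m k i * dvec m k i = 1 := by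
  unfold dvec; split <;> norm_num

lemma dvec_abs (i : Fin m) : |dvec m k i| = 1 := by
  unfold dvec; split <;> simp

def A0 : Matrix (Fin m) (Fin m) ℝ := Matrix.diagonal (dvec m k)

def AJ (j : Fin m) : Matrix (Fin m) (Fin m) ℝ :=
  (A0 m k).updateCol j (fun _ => -1)

lemma abs_det_A0 : |(A0 m k).det| = 1 := by
  rw [A0, Matrix.det_diagonal, Finset.abs_prod]
  simp [dvec_abs]

lemma abs_det_AJ (j : Fin m) : |(AJ m k j).det| = 1 := by
  have hcol : (fun _ : Fin m => (-1 : ℝ))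
      = fun r => ∑ c, (-(dvec m k c)) • (A0 m k) r c := by
    funext r
    rw [Finset.sum_eq_single r]
    · simp [A0, Matrix.diagonal_apply, smul_eq_mul]
      have := dvec_sq m k r
      nlinarith
    · intro b _ hb
      simp [A0, Matrix.diagonal_apply, Ne.symm hb]
    · simp
  rw [AJ, hcol, Matrix.det_updateCol_sum]
  rw [smul_eq_mul, abs_mul, abs_neg, dvec_abs, one_mul, abs_det_A0]

def f0 : (Fin m → ℝ) →ₗ[ℝ] (Fin m → ℝ) := Matrix.toLin' (A0 m k)

def fJ (j : Fin m) : (Fin m → ℝ) →ₗ[ℝ] (Fin m → ℝ) := Matrix.toLin' (AJ m k j)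

def S0 : Set (Fin m → ℝ) := f0 m k '' corner m

def SJ (j : Fin m) : Set (Fin m → ℝ) := fJ m k j '' corner m

lemma volume_S0 : volume (S0 m k) = volume (corner m) := by
  rw [S0, Measure.addHaar_image_linearMap, f0, LinearMap.det_toLin', abs_det_A0]
  simp

lemma volume_SJ (j : Fin m) : volume (SJ m k j) = volume (corner m) := by
  rw [SJ, Measure.addHaar_image_linearMap, fJ, LinearMap.det_toLin', abs_det_AJ]
  simp

lemma f0_apply (y : Fin m → ℝ) (r : Fin m) : f0 m k y r = dvec m k r * y r := by
  rw [f0, Matrix.toLin'_apply, A0, Matrix.mulVec_diagonal]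

lemma fJ_apply (j : Fin m) (y : Fin m → ℝ) (r : Fin m) :
    fJ m k j y r = -(y j) + (if r = j then 0 else dvec m k r * y r) := by
  rw [fJ, Matrix.toLin'_apply, Matrix.mulVec, dotProduct]
  rw [← Finset.add_sum_erase _ _ (Finset.mem_univ j)]
  congr 1
  · simp [AJ, Matrix.updateCol_apply]
  · rw [Finset.sum_congr rfl (g := fun c => if r = c then dvec m k r * y c else 0)]
    · rw [Finset.sum_ite_eq]
      by_cases hrj : r = j
      · simp [hrj]
      · simp [Finset.mem_erase, hrj]
    · intro c hc
      rw [Finset.mem_erase] at hc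
      simp only [AJ, Matrix.updateCol_apply, hc.1, if_false, A0, Matrix.diagonal_apply,
        ite_mul, zero_mul]

end Main

section Main2

variable (m k : ℕ)

def fsum (x : Fin m → ℝ) : ℝ := ∑ i, dvec m k i * x i

lemma fsum_comb (a b : ℝ) (x y : Fin m → ℝ) :
    fsum m k (a • x + b • y) = a * fsum m k x + b * fsum m k y := by
  simp only [fsum, Pi.add_apply, Pi.smul_apply, smul_eq_mul, mul_add, Finset.sum_add_distrib,
    Finset.mul_sum]
  congr 1 <;> (apply Finset.sum_congr rfl; intros; ring)

def Hset : Set (Fin m → ℝ) :=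
  {x | (∀ j : Fin m, k ≤ (j : ℕ) → x j ≤ 0) ∧
       (∀ i j : Fin m, (i : ℕ) < k → k ≤ (j : ℕ) → x j ≤ x i) ∧
       fsum m k x ≤ 1 ∧
       (∀ i : Fin m, (i : ℕ) < k → fsum m k x - x i ≤ 1)}

lemma convex_Hset : Convex ℝ (Hset m k) := by
  rintro x ⟨hx1, hx2, hx3, hx4⟩ y ⟨hy1, hy2, hy3, hy4⟩ a b ha hb hab
  have hcomb : ∀ r : Fin m, (a • x + b • y) r = a * x r + b * y r := by
    intro r; simp
  refine ⟨?_, ?_, ?_, ?_⟩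
  · intro j hj
    rw [hcomb]
    nlinarith [hx1 j hj, hy1 j hj]
  · intro i j hi hj
    rw [hcomb, hcomb]
    have := hx2 i j hi hj
    have := hy2 i j hi hj
    nlinarith
  · rw [fsum_comb]
    nlinarith
  · intro i hi
    rw [fsum_comb, hcomb]
    have := hx4 i hi
    have := hy4 i hi
    nlinarith

def pt (i : Fin m) : Fin m → ℝ :=
  if (i : ℕ) < k then Pi.single i 1 else -Pi.single i 1

def vneg : Fin m → ℝ := fun _ => -1

lemma pt_apply (c r : Fin m) : pt m k c r = if r = c then dvec m k c else 0 := by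
  unfold pt dvec
  by_cases h : (c : ℕ) < k <;> simp [h, Pi.single_apply] <;> split <;> norm_num

lemma card_filter_lt (hkm : k ≤ m) :
    (Finset.univ.filter (fun i : Fin m => (i : ℕ) < k)).card = k := by
  have : (Finset.univ.filter (fun i : Fin m => (i : ℕ) < k))
      = Finset.map ⟨Fin.castLE hkm, Fin.castLE_injective hkm⟩ Finset.univ := by
    ext i
    simp only [Finset.mem_filter, Finset.mem_univ, true_and, Finset.mem_map,
      Function.Embedding.coeFn_mk]
    constructor
    · intro h
      exact ⟨⟨(i : ℕ), h⟩, by ext; simp [Fin.castLE]⟩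
    · rintro ⟨a, rfl⟩
      exact a.2
  rw [this, Finset.card_map, Finset.card_univ, Fintype.card_fin]

lemma sum_dvec (hm : m = 2 * k) : ∑ i, dvec m k i = 0 := by
  unfold dvec
  rw [Finset.sum_ite, Finset.sum_const, Finset.sum_const]
  have h1 : (Finset.univ.filter (fun i : Fin m => (i : ℕ) < k)).card = k :=
    card_filter_lt m k (by omega)
  have h2 : (Finset.univ.filter (fun i : Fin m => ¬ (i : ℕ) < k)).card = k := by
    have := Finset.card_filter_add_card_filter_not
      (s := (Finset.univ : Finset (Fin m))) (p := fun i : Fin m => (i : ℕ) < k)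
    rw [Finset.card_univ, Fintype.card_fin] at this
    omega
  rw [h1, h2]
  simp

lemma fsum_pt (c : Fin m) : fsum m k (pt m k c) = 1 := by
  unfold fsum
  rw [Finset.sum_eq_single c]
  · rw [pt_apply]
    simp [dvec_sq]
  · intro b _ hb
    rw [pt_apply]
    simp [hb]
  · simp

lemma fsum_vneg (hm : m = 2 * k) : fsum m k (vneg m) = 0 := by
  unfold fsum vneg
  simp only [mul_neg, mul_one, Finset.sum_neg_distrib]
  rw [sum_dvec m k hm]
  simp

end Main2

section Main3

variable (m k : ℕ)

lemma vertexSet_eq (hm : m = 2 * k) :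
    F0barVertices (m + 1) = (({0} ∪ Set.range (pt m k)) ∪ {vneg m}) := by
  have hhalf : (m + 1 - 1) / 2 = k := by omega
  unfold F0barVertices vneg
  rw [hhalf]
  congr 1
  congr 1
  ext v
  simp only [Set.mem_setOf_eq, Set.mem_range]
  constructor
  · rintro ⟨i, (⟨h, rfl⟩ | ⟨h, rfl⟩)⟩
    · exact ⟨i, by simp [pt, h]⟩
    · exact ⟨i, by simp [pt, Nat.not_lt.2 h]⟩
  · rintro ⟨i, rfl⟩
    by_cases h : (i : ℕ) < k
    · exact ⟨i, Or.inl ⟨h, by simp [pt, h]⟩⟩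
    · exact ⟨i, Or.inr ⟨Nat.not_lt.1 h, by simp [pt, h]⟩⟩

lemma vertices_subset_Hset (hm : m = 2 * k) :
    (({0} ∪ Set.range (pt m k)) ∪ {vneg m}) ⊆ Hset m k := by
  rintro v ((rfl | ⟨c, rfl⟩) | rfl)
  · refine ⟨fun j _ => le_refl 0, fun i j _ _ => le_refl 0, ?_, fun i _ => ?_⟩
    · simp [fsum]
    · simp [fsum]
  · have hf := fsum_pt m k c
    refine ⟨?_, ?_, by rw [hf], ?_⟩
    · intro j hj
      rw [pt_apply]
      by_cases hjc : j = c
      · rw [if_pos hjc]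
        have : dvec m k c = -1 := by
          unfold dvec; simp [show ¬ ((c : ℕ) < k) by rw [hjc] at hj; omega]
        rw [this]; norm_num
      · rw [if_neg hjc]
    · intro i j hi hj
      rw [pt_apply, pt_apply]
      by_cases hjc : j = c
      · have hic : ¬ (i = c) := by
          intro h; rw [h] at hi; rw [hjc] at hj; omega
        rw [if_pos hjc, if_neg hic]
        have : dvec m k c = -1 := by
          unfold dvec; simp [show ¬ ((c : ℕ) < k) by rw [hjc] at hj; omega]
        rw [this]; norm_num
      · rw [if_neg hjc]
        by_cases hic : i = c
        · rw [if_pos hic]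
          have : dvec m k c = 1 := by
            unfold dvec; simp [show (c : ℕ) < k by rw [hic] at hi; omega]
          rw [this]; norm_num
        · rw [if_neg hic]
    · intro i hi
      rw [hf, pt_apply]
      by_cases hic : i = c
      · rw [if_pos hic]
        have : dvec m k c = 1 := by
          unfold dvec; simp [show (c : ℕ) < k by rw [hic] at hi; omega]
        rw [this]; norm_num
      · rw [if_neg hic]; norm_num
  · have hf := fsum_vneg m k hm
    exact ⟨fun j _ => by norm_num [vneg], fun i j _ _ => le_refl _,
      by rw [hf]; norm_num, fun i _ => by rw [hf]; norm_num [vneg]⟩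

lemma hull_subset_Hset (hm : m = 2 * k) :
    convexHull ℝ (F0barVertices (m + 1)) ⊆ Hset m k := by
  rw [vertexSet_eq m k hm]
  exact convexHull_min (vertices_subset_Hset m k hm) (convex_Hset m k)

end Main3

section Main4

variable (m k : ℕ)

lemma comb_mem_hull (V : Set (Fin m → ℝ)) (g : Fin m → (Fin m → ℝ))
    (hg : ∀ c, g c ∈ V) (h0 : (0 : Fin m → ℝ) ∈ V) {y : Fin m → ℝ} (hy : y ∈ corner m) :
    ∑ c, y c • g c ∈ convexHull ℝ V := by
  obtain ⟨hy0, hy1⟩ := hy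
  classical
  set w : Option (Fin m) → ℝ := fun o => Option.elim o (1 - ∑ i, y i) y with hw
  set z : Option (Fin m) → (Fin m → ℝ) := fun o => Option.elim o 0 g with hz
  have key : ∑ o : Option (Fin m), w o • z o ∈ convexHull ℝ V := by
    apply (convex_convexHull ℝ V).sum_mem
    · rintro (_ | c) _
      · simp only [hw, Option.elim]
        linarith
      · exact hy0 c
    · rw [Fintype.sum_option]
      simp [hw]
    · rintro (_ | c) _
      · exact subset_convexHull ℝ V h0
      · exact subset_convexHull ℝ V (hg c)
  rw [Fintype.sum_option] at key
  simpa [hw, hz] using key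

lemma S0_subset_hull (hm : m = 2 * k) :
    S0 m k ⊆ convexHull ℝ (F0barVertices (m + 1)) := by
  rintro x ⟨y, hy, rfl⟩
  have heq : f0 m k y = ∑ c, y c • pt m k c := by
    funext r
    rw [f0_apply, Finset.sum_apply]
    rw [Finset.sum_eq_single r]
    · rw [Pi.smul_apply, pt_apply, if_pos rfl, smul_eq_mul]; ring
    · intro b _ hb
      rw [Pi.smul_apply, pt_apply, if_neg (Ne.symm hb), smul_eq_mul, mul_zero]
    · simp
  rw [heq]
  apply comb_mem_hull m _ _ _ _ hy
  · intro c
    rw [vertexSet_eq m k hm]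
    exact Or.inl (Or.inr ⟨c, rfl⟩)
  · rw [vertexSet_eq m k hm]
    exact Or.inl (Or.inl rfl)

lemma SJ_subset_hull (hm : m = 2 * k) (j : Fin m) :
    SJ m k j ⊆ convexHull ℝ (F0barVertices (m + 1)) := by
  rintro x ⟨y, hy, rfl⟩
  have heq : fJ m k j y = ∑ c, y c • (fun c' => if c' = j then vneg m else pt m k c') c := by
    funext r
    rw [fJ_apply, Finset.sum_apply]
    rw [← Finset.add_sum_erase _ _ (Finset.mem_univ j)]
    have hj : (y j • (fun c' => if c' = j then vneg m else pt m k c') j) r = -(y j) := by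
      simp [vneg]
    rw [hj]
    congr 1
    by_cases hrj : r = j
    · rw [if_pos hrj]
      refine (Finset.sum_eq_zero ?_).symm
      intro c hc
      rw [Finset.mem_erase] at hc
      simp only [Pi.smul_apply, if_neg hc.1, pt_apply, smul_eq_mul]
      rw [hrj, if_neg (Ne.symm hc.1), mul_zero]
    · rw [if_neg hrj]
      rw [Finset.sum_eq_single_of_mem r (Finset.mem_erase.mpr ⟨hrj, Finset.mem_univ r⟩)]

      · simp only [Pi.smul_apply, if_neg hrj, pt_apply, if_pos rfl, smul_eq_mul]
        rw [if_pos trivial]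
        ring
      · intro b hb hbr
        rw [Finset.mem_erase] at hb
        simp only [Pi.smul_apply, if_neg hb.1, pt_apply, smul_eq_mul]
        rw [if_neg (Ne.symm hbr), mul_zero]
  rw [heq]
  apply comb_mem_hull m _ _ _ _ hy
  · intro c
    rw [vertexSet_eq m k hm]
    by_cases hcj : c = j
    · rw [if_pos hcj]
      exact Or.inr rfl
    · rw [if_neg hcj]
      exact Or.inl (Or.inr ⟨c, rfl⟩)
  · rw [vertexSet_eq m k hm]
    exact Or.inl (Or.inl rfl)

end Main4

section Main5

variable (m k : ℕ)

lemma Hset_subset_union (hk : 1 ≤ k) (hm : m = 2 * k) :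
    Hset m k ⊆ S0 m k ∪ ⋃ (j : Fin m) (_ : (j : ℕ) < k), SJ m k j := by
  intro x hx
  obtain ⟨h1, h2, h3, h4⟩ := hx
  have hm0 : 0 < m := by omega
  have hJne : (Finset.univ.filter (fun i : Fin m => (i : ℕ) < k)).Nonempty := by
    refine ⟨⟨0, hm0⟩, ?_⟩
    simp only [Finset.mem_filter, Finset.mem_univ, true_and]
    simpa using (by omega : 0 < k)
  obtain ⟨j₀, hj₀mem, hj₀min⟩ := Finset.exists_min_image _ x hJne
  rw [Finset.mem_filter] at hj₀mem
  have hj₀k : (j₀ : ℕ) < k := hj₀mem.2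
  have hmin : ∀ i : Fin m, (i : ℕ) < k → x j₀ ≤ x i := by
    intro i hi
    exact hj₀min i (Finset.mem_filter.mpr ⟨Finset.mem_univ i, hi⟩)
  by_cases hx0 : 0 ≤ x j₀
  · left
    refine ⟨fun i => dvec m k i * x i, ⟨?_, ?_⟩, ?_⟩
    · intro i
      dsimp only
      unfold dvec
      by_cases hik : (i : ℕ) < k
      · rw [if_pos hik, one_mul]
        exact le_trans hx0 (hmin i hik)
      · rw [if_neg hik, neg_one_mul]
        simpa using h1 i (Nat.not_lt.1 hik)
    · exact h3
    · funext r
      rw [f0_apply, ← mul_assoc, dvec_sq, one_mul]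
  · right
    rw [Set.mem_iUnion]
    refine ⟨j₀, ?_⟩
    rw [Set.mem_iUnion]
    refine ⟨hj₀k, ?_⟩
    push_neg at hx0
    set y : Fin m → ℝ := fun i => if i = j₀ then -(x j₀) else dvec m k i * (x i - x j₀) with hy
    have hdj₀ : dvec m k j₀ = 1 := by unfold dvec; rw [if_pos hj₀k]
    refine ⟨y, ⟨?_, ?_⟩, ?_⟩
    · intro i
      rw [hy]
      dsimp only
      by_cases hij : i = j₀
      · rw [if_pos hij]; linarith
      · rw [if_neg hij]
        unfold dvec
        by_cases hik : (i : ℕ) < k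
        · rw [if_pos hik, one_mul]
          have := hmin i hik
          linarith
        · rw [if_neg hik, neg_one_mul]
          have := h2 j₀ i hj₀k (Nat.not_lt.1 hik)
          linarith
    · have hsum : ∑ i, y i = fsum m k x - x j₀ := by
        rw [← Finset.add_sum_erase _ y (Finset.mem_univ j₀), hy]
        simp only [eq_self_iff_true, if_true]
        have hrest : ∑ i ∈ Finset.univ.erase j₀, (if i = j₀ then -(x j₀)
            else dvec m k i * (x i - x j₀))
            = (∑ i ∈ Finset.univ.erase j₀, dvec m k i * x i)
              - (∑ i ∈ Finset.univ.erase j₀, dvec m k i) * x j₀ := by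
          rw [Finset.sum_mul, ← Finset.sum_sub_distrib]
          apply Finset.sum_congr rfl
          intro i hi
          rw [Finset.mem_erase] at hi
          rw [if_neg hi.1]
          ring
        rw [hrest]
        have e1 : ∑ i ∈ Finset.univ.erase j₀, dvec m k i * x i
            = fsum m k x - dvec m k j₀ * x j₀ := by
          rw [fsum, ← Finset.add_sum_erase _ _ (Finset.mem_univ j₀)]
          ring
        have e2 : ∑ i ∈ Finset.univ.erase j₀, dvec m k i = -1 := by
          have := Finset.add_sum_erase Finset.univ (dvec m k) (Finset.mem_univ j₀)
          rw [sum_dvec m k hm] at this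
          rw [hdj₀] at this
          linarith
        rw [e1, e2, hdj₀]
        ring
      rw [hsum]
      exact h4 j₀ hj₀k
    · funext r
      rw [fJ_apply, hy]
      simp only [eq_self_iff_true, if_true]
      by_cases hrj : r = j₀
      · rw [if_pos hrj, hrj]
        ring
      · rw [if_neg hrj, if_neg hrj, ← mul_assoc, dvec_sq, one_mul]
        ring

lemma S0_coord {x : Fin m → ℝ} (hx : x ∈ S0 m k) (j : Fin m) (hj : (j : ℕ) < k) :
    0 ≤ x j := by
  obtain ⟨y, ⟨hy0, -⟩, rfl⟩ := hx
  rw [f0_apply]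
  unfold dvec
  rw [if_pos hj, one_mul]
  exact hy0 j

lemma SJ_coord_self {x : Fin m → ℝ} {j : Fin m} (hx : x ∈ SJ m k j) : x j ≤ 0 := by
  obtain ⟨y, ⟨hy0, -⟩, rfl⟩ := hx
  rw [fJ_apply, if_pos rfl]
  have := hy0 j
  linarith

lemma SJ_coord_other {x : Fin m → ℝ} {j j' : Fin m} (hx : x ∈ SJ m k j)
    (hj' : (j' : ℕ) < k) (hne : j' ≠ j) : x j ≤ x j' := by
  obtain ⟨y, ⟨hy0, -⟩, rfl⟩ := hx
  rw [fJ_apply, fJ_apply, if_pos rfl, if_neg hne]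
  have h1 := hy0 j'
  have h2 : dvec m k j' = 1 := by unfold dvec; rw [if_pos hj']
  rw [h2]
  linarith

end Main5

section Main6

variable (m k : ℕ)

lemma measurableSet_S0 : MeasurableSet (S0 m k) :=
  (((isCompact_corner m).image (f0 m k).continuous_of_finiteDimensional).isClosed).measurableSet

lemma measurableSet_SJ (j : Fin m) : MeasurableSet (SJ m k j) :=
  (((isCompact_corner m).image
    (fJ m k j).continuous_of_finiteDimensional).isClosed).measurableSet

lemma vol_hplane0 (j : Fin m) : volume {x : Fin m → ℝ | x j = 0} = 0 := by
  have hset : {x : Fin m → ℝ | x j = 0}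
      = (LinearMap.ker (LinearMap.proj j : (Fin m → ℝ) →ₗ[ℝ] ℝ) : Set (Fin m → ℝ)) := by
    ext x; simp [LinearMap.mem_ker]
  rw [hset]
  refine Measure.addHaar_submodule _ _ ?_
  intro h
  have h1 : (Pi.single j 1 : Fin m → ℝ) ∈
      LinearMap.ker (LinearMap.proj j : (Fin m → ℝ) →ₗ[ℝ] ℝ) := by
    rw [h]; exact Submodule.mem_top
  rw [LinearMap.mem_ker] at h1
  simp [LinearMap.proj] at h1

lemma vol_hplane2 (i j : Fin m) (hij : i ≠ j) : volume {x : Fin m → ℝ | x i = x j} = 0 := by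
  have hset : {x : Fin m → ℝ | x i = x j}
      = (LinearMap.ker ((LinearMap.proj i : (Fin m → ℝ) →ₗ[ℝ] ℝ)
          - LinearMap.proj j) : Set (Fin m → ℝ)) := by
    ext x
    simp only [Set.mem_setOf_eq, SetLike.mem_coe, LinearMap.mem_ker, LinearMap.sub_apply,
      LinearMap.proj_apply]
    constructor
    · intro h; rw [h]; ring
    · intro h; linarith [sub_eq_zero.mp h]
  rw [hset]
  refine Measure.addHaar_submodule _ _ ?_
  intro h
  have h1 : (Pi.single i 1 : Fin m → ℝ) ∈
      LinearMap.ker ((LinearMap.proj i : (Fin m → ℝ) →ₗ[ℝ] ℝ) - LinearMap.proj j) := by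
    rw [h]; exact Submodule.mem_top
  rw [LinearMap.mem_ker] at h1
  simp only [LinearMap.sub_apply, LinearMap.proj_apply] at h1
  rw [Pi.single_eq_same, Pi.single_eq_of_ne (Ne.symm hij)] at h1
  norm_num at h1

end Main6

theorem main_vol (k : ℕ) (hk : 1 ≤ k) :
    volume (convexHull ℝ (F0barVertices (2 * k + 1)) : Set (Fin (2 * k) → ℝ))
      = ((k + 1 : ℕ) : ENNReal) * (((2 * k).factorial : ℕ) : ENNReal)⁻¹ := by
  set m := 2 * k with hmdef
  have hm : m = 2 * k := rfl
  set G : Set (Fin m → ℝ) := (convexHull ℝ (F0barVertices (m + 1)) : Set (Fin m → ℝ)) with hG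
  set J : Finset (Fin m) := Finset.univ.filter (fun j : Fin m => (j : ℕ) < k) with hJ
  have hGeq : G = S0 m k ∪ ⋃ j ∈ J, SJ m k j := by
    have hU : (⋃ (j : Fin m) (_ : (j : ℕ) < k), SJ m k j) = ⋃ j ∈ J, SJ m k j := by
      ext x; simp [hJ]
    apply le_antisymm
    · intro x hx
      rw [← hU]
      exact Hset_subset_union m k hk hm (hull_subset_Hset m k hm hx)
    · apply Set.union_subset
      · exact S0_subset_hull m k hm
      · rw [← hU]
        refine Set.iUnion_subset fun j => Set.iUnion_subset fun _ => SJ_subset_hull m k hm j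
  set N : Set (Fin m → ℝ) :=
    (⋃ j : Fin m, {x : Fin m → ℝ | x j = 0}) ∪
      ⋃ (p : Fin m × Fin m) (_ : p.1 ≠ p.2), {x : Fin m → ℝ | x p.1 = x p.2} with hN
  have hNnull : volume N = 0 := by
    refine measure_union_null (measure_iUnion_null fun j => vol_hplane0 m j) ?_
    exact measure_iUnion_null fun p => measure_iUnion_null fun hp => vol_hplane2 m p.1 p.2 hp
  have hNmeas : MeasurableSet N := by
    apply MeasurableSet.union
    · exact MeasurableSet.iUnion fun j =>
        (isClosed_eq (continuous_apply j) continuous_const).measurableSet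
    · exact MeasurableSet.iUnion fun p => MeasurableSet.iUnion fun _ =>
        (isClosed_eq (continuous_apply p.1) (continuous_apply p.2)).measurableSet
  have hvolG : volume G = volume (G \ N) := (measure_diff_null hNnull).symm
  have hsplit : G \ N = (S0 m k \ N) ∪ ⋃ j ∈ J, (SJ m k j \ N) := by
    rw [hGeq, Set.union_diff_distrib]
    congr 1
    rw [Set.iUnion_diff]
    apply Set.iUnion_congr
    intro j
    rw [Set.iUnion_diff]
  have hdisj : Disjoint (S0 m k \ N) (⋃ j ∈ J, (SJ m k j \ N)) := by
    rw [Set.disjoint_left]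
    rintro x ⟨hxS0, hxN⟩ hxU
    rw [Set.mem_iUnion] at hxU
    obtain ⟨j, hxU⟩ := hxU
    rw [Set.mem_iUnion] at hxU
    obtain ⟨hjJ, hxSJ, -⟩ := hxU
    rw [hJ, Finset.mem_filter] at hjJ
    have h1 : 0 ≤ x j := S0_coord m k hxS0 j hjJ.2
    have h2 : x j ≤ 0 := SJ_coord_self m k hxSJ
    apply hxN
    rw [hN]
    refine Or.inl (Set.mem_iUnion.mpr ⟨j, ?_⟩)
    exact le_antisymm h2 h1
  have hmeasU : MeasurableSet (⋃ j ∈ J, (SJ m k j \ N)) :=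
    MeasurableSet.iUnion fun j => MeasurableSet.iUnion fun _ =>
      (measurableSet_SJ m k j).diff hNmeas
  have hpair : (J : Set (Fin m)).PairwiseDisjoint (fun j => SJ m k j \ N) := by
    intro j hj j' hj' hne
    rw [Finset.coe_filter] at hj hj'
    simp only [Set.mem_setOf_eq, Finset.mem_univ, true_and] at hj hj'
    rw [Function.onFun, Set.disjoint_left]
    rintro x ⟨hxj, hxN⟩ ⟨hxj', -⟩
    have h1 : x j ≤ x j' := SJ_coord_other m k hxj hj' (Ne.symm hne)
    have h2 : x j' ≤ x j := SJ_coord_other m k hxj' hj hne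
    apply hxN
    rw [hN]
    refine Or.inr (Set.mem_iUnion.mpr ⟨(j, j'), Set.mem_iUnion.mpr ⟨hne, ?_⟩⟩)
    exact le_antisymm h1 h2
  have hvol : volume G = volume (S0 m k \ N) + ∑ j ∈ J, volume (SJ m k j \ N) := by
    rw [hvolG, hsplit, measure_union hdisj hmeasU, measure_biUnion_finset hpair
      (fun j _ => (measurableSet_SJ m k j).diff hNmeas)]
  have hS0v : volume (S0 m k \ N) = volume (corner m) := by
    rw [measure_diff_null hNnull, volume_S0]
  have hSJv : ∀ j ∈ J, volume (SJ m k j \ N) = volume (corner m) := by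
    intro j _
    rw [measure_diff_null hNnull, volume_SJ]
  rw [hS0v, Finset.sum_congr rfl hSJv, Finset.sum_const] at hvol
  have hcard : J.card = k := card_filter_lt m k (by omega)
  rw [hcard] at hvol
  rw [hvol, volume_corner m]
  rw [nsmul_eq_mul]
  push_cast
  ring

theorem main_full (k : ℕ) (hk : 1 ≤ k) :
    (((2 * k).factorial : ℕ) : ENNReal) *
        volume (convexHull ℝ (F0barVertices (2 * k + 1)) : Set (Fin (2 * k) → ℝ))
      = ((k + 1 : ℕ) : ENNReal) := by
  rw [main_vol k hk]
  rw [← mul_assoc, mul_comm (((2 * k).factorial : ℕ) : ENNReal) ((k + 1 : ℕ) : ENNReal),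
    mul_assoc, ENNReal.mul_inv_cancel (by exact_mod_cast Nat.factorial_pos (2*k) |>.ne')
      (by simp), mul_one]

/-- For odd `n ≥ 3`, the polytope `F̄_0 ⊂ ℝ^{n-1}` has normalized volume `(n+1)/2`. -/
theorem nvol_F0bar (n : ℕ) (hn : 3 ≤ n) (hodd : Odd n) :
    ((n - 1).factorial : ENNReal) * volume (convexHull ℝ (F0barVertices n)) =
      ((n + 1) / 2 : ℕ) := by
  obtain ⟨k, hk2⟩ := hodd
  have hn' : n = 2 * k + 1 := by omega
  subst hn'
  have hk : 1 ≤ k := by omega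
  have harith : (2 * k + 1 + 1) / 2 = k + 1 := by omega
  rw [harith]
  exact main_full k hk
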